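/- Let Φ_T ∈ ℝ^{m×t} be a matrix with full column rank (i.e., the map x ↦ Φ_T x is injective), let C ⊆ ℝ^m be a finite nonempty codebook, let Ŷ ∈ C, and let R := { y ∈ ℝ^m : ‖y − Ŷ‖₂ ≤ ‖y − ω′‖₂ for all ω′ ∈ C } be the Voronoi region of Ŷ. Define Q := { (x, y) ∈ ℝ^t × R : ‖y − Φ_T x‖₂ ≤ ‖y′ − Φ_T x′‖₂ for all (x′, y′) ∈ ℝ^t × R }. Then Q is nonempty, closed, and convex, and there exists a unique pair (x̃, ỹ) ∈ Q satisfying ‖ỹ − Ŷ‖₂ ≤ ‖y − Ŷ‖₂ for all (x, y) ∈ Q. -/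
import Mathlib


open Matrix

/-- The vector `v ∈ ℝ^m` viewed as an element of Euclidean (ℓ₂) space. -/
noncomputable def toE {m : ℕ} (v : Fin m → ℝ) : EuclideanSpace ℝ (Fin m) :=
  (WithLp.equiv 2 (Fin m → ℝ)).symm v

open RealInnerProductSpace in
/-- Fourier–Motzkin feasibility: a finite system `d i ≤ r * c i` is solvable in `r`
iff the zero-coefficient constraints hold and the pairwise compatibility holds. -/
private lemma fm_exists {ι : Type*} [Fintype ι] (c d : ι → ℝ)
    (H0 : ∀ i, c i = 0 → d i ≤ 0)
    (Hp : ∀ i j, 0 < c i → c j < 0 → c i * d j ≤ c j * d i) :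
    ∃ r : ℝ, ∀ i, d i ≤ r * c i := by
  classical
  set P : Finset ι := Finset.univ.filter (fun i => 0 < c i) with hP
  set N : Finset ι := Finset.univ.filter (fun i => c i < 0) with hN
  by_cases hPne : P.Nonempty
  · refine ⟨P.sup' hPne (fun i => d i / c i), fun i => ?_⟩
    rcases lt_trichotomy (c i) 0 with hci | hci | hci
    · have hle : P.sup' hPne (fun j => d j / c j) ≤ d i / c i := by
        apply Finset.sup'_le
        intro j hj
        have hcj : 0 < c j := (Finset.mem_filter.mp hj).2
        have h := Hp j i hcj hci
        rw [div_le_iff₀ hcj]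
        have hne : c i ≠ 0 := ne_of_lt hci
        have hu : d i / c i * c i = d i := div_mul_cancel₀ _ hne
        nlinarith [h, hu]
      have := (le_div_iff_of_neg hci).mp hle
      linarith
    · simpa [hci] using H0 i hci
    · have hiP : i ∈ P := Finset.mem_filter.mpr ⟨Finset.mem_univ _, hci⟩
      have := Finset.le_sup' (fun j => d j / c j) hiP
      have := (div_le_iff₀ hci).mp this
      linarith
  · by_cases hNne : N.Nonempty
    · refine ⟨N.inf' hNne (fun i => d i / c i), fun i => ?_⟩
      rcases lt_trichotomy (c i) 0 with hci | hci | hci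
      · have hiN : i ∈ N := Finset.mem_filter.mpr ⟨Finset.mem_univ _, hci⟩
        have := Finset.inf'_le (fun j => d j / c j) hiN
        have := (le_div_iff_of_neg hci).mp this
        linarith
      · simpa [hci] using H0 i hci
      · exact (hPne ⟨i, Finset.mem_filter.mpr ⟨Finset.mem_univ _, hci⟩⟩).elim
    · refine ⟨0, fun i => ?_⟩
      have h1 : ¬ 0 < c i := fun h => hPne ⟨i, Finset.mem_filter.mpr ⟨Finset.mem_univ _, h⟩⟩
      have h2 : ¬ c i < 0 := fun h => hNne ⟨i, Finset.mem_filter.mpr ⟨Finset.mem_univ _, h⟩⟩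
      have : c i = 0 := le_antisymm (not_lt.mp h1) (not_lt.mp h2)
      simpa [this] using H0 i this

open RealInnerProductSpace in
/-- A finite intersection of closed half-spaces. -/
private def VPoly {m : ℕ} (S : Set (EuclideanSpace ℝ (Fin m))) : Prop :=
  ∃ (ι : Type) (_ : Fintype ι) (a : ι → EuclideanSpace ℝ (Fin m)) (b : ι → ℝ),
    S = {y | ∀ i, ⟪a i, y⟫ ≤ b i}

open RealInnerProductSpace in
private lemma vpoly_closed {m : ℕ} {S : Set (EuclideanSpace ℝ (Fin m))} (h : VPoly S) :
    IsClosed S := by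
  obtain ⟨ι, hι, a, b, rfl⟩ := h
  have : {y : EuclideanSpace ℝ (Fin m) | ∀ i, ⟪a i, y⟫ ≤ b i} =
      ⋂ i, {y | ⟪a i, y⟫ ≤ b i} := by ext y; simp
  rw [this]
  exact isClosed_iInter fun i =>
    isClosed_le (Continuous.inner continuous_const continuous_id) continuous_const

open RealInnerProductSpace in
private lemma vpoly_convex {m : ℕ} {S : Set (EuclideanSpace ℝ (Fin m))} (h : VPoly S) :
    Convex ℝ S := by
  obtain ⟨ι, hι, a, b, rfl⟩ := h
  have : {y : EuclideanSpace ℝ (Fin m) | ∀ i, ⟪a i, y⟫ ≤ b i} =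
      ⋂ i, {y | ⟪a i, y⟫ ≤ b i} := by ext y; simp
  rw [this]
  exact convex_iInter fun i => convex_halfSpace_le
    ⟨fun x y => inner_add_right _ _ _, fun r x => real_inner_smul_right _ _ r⟩ (b i)

open RealInnerProductSpace in
/-- Fourier–Motzkin elimination: the sum of a polyhedron and a line is a polyhedron. -/
private lemma vpoly_add_smul {m : ℕ} {S : Set (EuclideanSpace ℝ (Fin m))} (hS : VPoly S)
    (v : EuclideanSpace ℝ (Fin m)) : VPoly {z | ∃ r : ℝ, z - r • v ∈ S} := by
  classical
  obtain ⟨ι, hι, a, b, rfl⟩ := hS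
  set c : ι → ℝ := fun i => ⟪a i, v⟫ with hc
  refine ⟨ι ⊕ ι × ι, inferInstance,
    Sum.elim (fun i => if c i = 0 then a i else 0)
      (fun p => if 0 < c p.1 ∧ c p.2 < 0 then c p.1 • a p.2 - c p.2 • a p.1 else 0),
    Sum.elim (fun i => if c i = 0 then b i else 0)
      (fun p => if 0 < c p.1 ∧ c p.2 < 0 then c p.1 * b p.2 - c p.2 * b p.1 else 0), ?_⟩
  ext z
  simp only [Set.mem_setOf_eq]
  constructor
  · rintro ⟨r, hr⟩ k
    have hr' : ∀ i, ⟪a i, z⟫ - r * c i ≤ b i := by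
      intro i
      have := hr i
      rwa [inner_sub_right, real_inner_smul_right] at this
    rcases k with i | ⟨i, j⟩
    · by_cases h0 : c i = 0
      · have := hr' i
        rw [h0] at this
        simp only [Sum.elim_inl, if_pos h0]
        linarith
      · simp [h0]
    · by_cases hij : 0 < c i ∧ c j < 0
      · obtain ⟨hi, hj⟩ := hij
        simp only [Sum.elim_inr, if_pos (⟨hi, hj⟩ : 0 < c i ∧ c j < 0),
          inner_sub_left, real_inner_smul_left]
        have h1 := hr' i
        have h2 := hr' j
        nlinarith
      · simp [hij]
  · intro h
    have H0 : ∀ i, c i = 0 → ⟪a i, z⟫ - b i ≤ 0 := by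
      intro i h0
      have := h (Sum.inl i)
      simp only [Sum.elim_inl, if_pos h0] at this
      linarith
    have Hp : ∀ i j, 0 < c i → c j < 0 →
        c i * (⟪a j, z⟫ - b j) ≤ c j * (⟪a i, z⟫ - b i) := by
      intro i j hi hj
      have := h (Sum.inr (i, j))
      simp only [Sum.elim_inr, if_pos (⟨hi, hj⟩ : 0 < c i ∧ c j < 0),
        inner_sub_left, real_inner_smul_left] at this
      nlinarith
    obtain ⟨r, hr⟩ := fm_exists c (fun i => ⟪a i, z⟫ - b i) H0 Hp
    refine ⟨r, fun i => ?_⟩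
    have := hr i
    rw [inner_sub_right, real_inner_smul_right]
    linarith

private lemma vpoly_add_span_list {m : ℕ} {S : Set (EuclideanSpace ℝ (Fin m))} (hS : VPoly S) :
    ∀ l : List (EuclideanSpace ℝ (Fin m)),
      VPoly {z | ∃ w ∈ Submodule.span ℝ {x | x ∈ l}, z - w ∈ S} := by
  intro l
  induction l with
  | nil =>
      have : {z | ∃ w ∈ Submodule.span ℝ {x : EuclideanSpace ℝ (Fin m) | x ∈ ([] : List _)}, z - w ∈ S} = S := by
        ext z
        constructor
        · rintro ⟨w, hw, hzw⟩
          have : {x : EuclideanSpace ℝ (Fin m) | x ∈ ([] : List _)} = (∅ : Set _) := by ext x; simp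
          rw [this, Submodule.span_empty, Submodule.mem_bot] at hw
          simpa [hw] using hzw
        · intro hz
          exact ⟨0, Submodule.zero_mem _, by simpa using hz⟩
      rw [this]; exact hS
  | cons v l ih =>
      have hins : {x : EuclideanSpace ℝ (Fin m) | x ∈ v :: l} = insert v {x | x ∈ l} := by
        ext x; simp [List.mem_cons]
      have hset : {z | ∃ w ∈ Submodule.span ℝ {x : EuclideanSpace ℝ (Fin m) | x ∈ v :: l}, z - w ∈ S}
          = {z | ∃ r : ℝ, z - r • v ∈ {z' | ∃ w ∈ Submodule.span ℝ {x | x ∈ l}, z' - w ∈ S}} := by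
        ext z
        simp only [Set.mem_setOf_eq, hins, Submodule.mem_span_insert]
        constructor
        · rintro ⟨w, ⟨r, w', hw', rfl⟩, hzw⟩
          refine ⟨r, w', hw', ?_⟩
          have h : z - r • v - w' = z - (r • v + w') := by abel
          rw [h]; exact hzw
        · rintro ⟨r, w', hw', h⟩
          refine ⟨r • v + w', ⟨r, w', hw', rfl⟩, ?_⟩
          have h2 : z - (r • v + w') = z - r • v - w' := by abel
          rw [h2]; exact h
      rw [hset]
      exact vpoly_add_smul ih v

private lemma vpoly_add_submodule {m : ℕ} {S : Set (EuclideanSpace ℝ (Fin m))} (hS : VPoly S)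
    (V : Submodule ℝ (EuclideanSpace ℝ (Fin m))) :
    VPoly {z | ∃ w ∈ V, z - w ∈ S} := by
  obtain ⟨s, hs⟩ := (IsNoetherian.noetherian V : V.FG)
  have hl : {x : EuclideanSpace ℝ (Fin m) | x ∈ s.toList} = (s : Set _) := by
    ext x; simp [Finset.mem_toList]
  have := vpoly_add_span_list hS s.toList
  rw [hl, hs] at this
  exact this

open RealInnerProductSpace in
/-- Uniqueness of the nearest point of a convex set. -/
private lemma nearest_unique {m : ℕ} {K : Set (EuclideanSpace ℝ (Fin m))} (hK : Convex ℝ K)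
    {u v₁ v₂ : EuclideanSpace ℝ (Fin m)} (h₁ : v₁ ∈ K) (h₂ : v₂ ∈ K)
    (m₁ : ∀ w ∈ K, ‖u - v₁‖ ≤ ‖u - w‖) (m₂ : ∀ w ∈ K, ‖u - v₂‖ ≤ ‖u - w‖) :
    v₁ = v₂ := by
  have hmid : (1/2 : ℝ) • v₁ + (1/2 : ℝ) • v₂ ∈ K :=
    hK h₁ h₂ (by norm_num) (by norm_num) (by norm_num)
  set a := u - v₁ with ha
  set b := u - v₂ with hb
  have hmid' : u - ((1/2 : ℝ) • v₁ + (1/2 : ℝ) • v₂) = (1/2 : ℝ) • (a + b) := by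
    rw [ha, hb]; module
  have h1 := m₁ _ hmid
  rw [hmid'] at h1
  have heq : ‖a‖ = ‖b‖ := le_antisymm (m₁ _ h₂) (m₂ _ h₁)
  have hsm : ‖(1/2 : ℝ) • (a + b)‖ = (1/2) * ‖a + b‖ := by
    rw [norm_smul]; norm_num
  rw [hsm] at h1
  have hab : ‖a + b‖ ^ 2 = ‖a‖^2 + 2 * ⟪a, b⟫ + ‖b‖^2 := norm_add_sq_real a b
  have hab' : ‖a - b‖ ^ 2 = ‖a‖^2 - 2 * ⟪a, b⟫ + ‖b‖^2 := norm_sub_sq_real a b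
  have h2 : ‖a‖^2 ≤ (1/2 * ‖a + b‖)^2 := by
    have := norm_nonneg a
    nlinarith
  have heq2 : ‖a‖^2 = ‖b‖^2 := by rw [heq]
  have h3 : ‖a - b‖ ^ 2 ≤ 0 := by nlinarith
  have h4 : a - b = 0 := by
    have := sq_nonneg ‖a - b‖
    have : ‖a - b‖ = 0 := by nlinarith [norm_nonneg (a - b)]
    exact norm_eq_zero.mp this
  have h5 : v₂ - v₁ = 0 := by
    have h6 : a - b = v₂ - v₁ := by rw [ha, hb]; abel
    rwa [h6] at h4
  exact (sub_eq_zero.mp h5).symm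

open RealInnerProductSpace in
/-- Appendix C of the paper (existence and uniqueness of `(x̃, ỹ)` in Definition 2):
for a full-column-rank `Φ_T` and the Voronoi region `R` of a codeword `Ŷ` of a finite
codebook `C ⊆ ℝ^m`, the set `Q` of minimizers of `(x, y) ↦ ‖y − Φ_T x‖₂` over
`ℝ^t × R` is nonempty, closed, and convex, and contains a unique pair `(x̃, ỹ)`
minimizing `‖y − Ŷ‖₂` over `Q`. -/
theorem stmt19 {m t : ℕ} (Φ : Matrix (Fin m) (Fin t) ℝ)
    (hrank : Function.Injective Φ.mulVec)
    (C : Finset (EuclideanSpace ℝ (Fin m))) (hC : C.Nonempty)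
    (Yhat : EuclideanSpace ℝ (Fin m)) (hYhat : Yhat ∈ C) :
    ∀ Rg : Set (EuclideanSpace ℝ (Fin m)),
      Rg = {y | ∀ ω' ∈ C, ‖y - Yhat‖ ≤ ‖y - ω'‖} →
    ∀ Q : Set ((Fin t → ℝ) × EuclideanSpace ℝ (Fin m)),
      Q = {p | p.2 ∈ Rg ∧ ∀ x' : Fin t → ℝ, ∀ y' ∈ Rg,
        ‖p.2 - toE (Φ.mulVec p.1)‖ ≤ ‖y' - toE (Φ.mulVec x')‖} →
    Q.Nonempty ∧ IsClosed Q ∧ Convex ℝ Q ∧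
      ∃! p : (Fin t → ℝ) × EuclideanSpace ℝ (Fin m),
        p ∈ Q ∧ ∀ q ∈ Q, ‖p.2 - Yhat‖ ≤ ‖q.2 - Yhat‖ := by
  intro Rg hRg Q hQ
  classical
  -- the linear map `x ↦ toE (Φ.mulVec x)`
  set L : (Fin t → ℝ) →ₗ[ℝ] EuclideanSpace ℝ (Fin m) :=
    (WithLp.linearEquiv 2 ℝ (Fin m → ℝ)).symm.toLinearMap.comp Φ.mulVecLin with hL
  have hLf : ∀ x, toE (Φ.mulVec x) = L x := fun x => rfl
  have hLcont : Continuous L := L.continuous_of_finiteDimensional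
  set V : Submodule ℝ (EuclideanSpace ℝ (Fin m)) := LinearMap.range L with hV
  -- `Rg` is a polyhedron
  have keyRg : ∀ (y ω' : EuclideanSpace ℝ (Fin m)),
      (‖y - Yhat‖ ≤ ‖y - ω'‖) ↔ ⟪(2:ℝ) • (ω' - Yhat), y⟫ ≤ ‖ω'‖^2 - ‖Yhat‖^2 := by
    intro y ω'
    have c1 := real_inner_comm y Yhat
    have c2 := real_inner_comm y ω'
    constructor
    · intro h
      have hsq := pow_le_pow_left₀ (norm_nonneg _) h 2
      rw [norm_sub_sq_real, norm_sub_sq_real] at hsq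
      rw [real_inner_smul_left, inner_sub_left]
      linarith
    · intro h
      rw [real_inner_smul_left, inner_sub_left] at h
      have hsq : ‖y - Yhat‖^2 ≤ ‖y - ω'‖^2 := by
        rw [norm_sub_sq_real, norm_sub_sq_real]
        linarith
      exact (pow_le_pow_iff_left₀ (norm_nonneg _) (norm_nonneg _) two_ne_zero).mp hsq
  have hRpoly : VPoly Rg := by
    refine ⟨{ω // ω ∈ C}, inferInstance, fun ω => (2:ℝ) • (ω.1 - Yhat),
      fun ω => ‖ω.1‖^2 - ‖Yhat‖^2, ?_⟩
    rw [hRg]; ext y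
    simp only [Set.mem_setOf_eq]
    constructor
    · intro h ω
      exact (keyRg y ω.1).mp (h ω.1 ω.2)
    · intro h ω' hω'
      exact (keyRg y ω').mpr (h ⟨ω', hω'⟩)
  have hRclosed : IsClosed Rg := vpoly_closed hRpoly
  have hRconvex : Convex ℝ Rg := vpoly_convex hRpoly
  have hYRg : Yhat ∈ Rg := by
    rw [hRg]; intro ω' _; simp
  -- the sum `D = Rg + V` is a closed convex polyhedron
  set D : Set (EuclideanSpace ℝ (Fin m)) := {z | ∃ w ∈ V, z - w ∈ Rg} with hD
  have hDpoly : VPoly D := vpoly_add_submodule hRpoly V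
  have hDclosed : IsClosed D := vpoly_closed hDpoly
  have hDconvex : Convex ℝ D := vpoly_convex hDpoly
  have hDne : D.Nonempty := ⟨Yhat, 0, Submodule.zero_mem _, by simpa using hYRg⟩
  -- every value `y' - L x'` with `y' ∈ Rg` lies in `D`
  have hDmem : ∀ (x' : Fin t → ℝ) (y' : EuclideanSpace ℝ (Fin m)), y' ∈ Rg →
      y' - toE (Φ.mulVec x') ∈ D := by
    intro x' y' hy'
    refine ⟨L (-x'), LinearMap.mem_range_self _ _, ?_⟩
    have : y' - toE (Φ.mulVec x') - L (-x') = y' := by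
      rw [hLf, map_neg]; abel
    rw [this]; exact hy'
  -- the minimum-norm point of `D`
  obtain ⟨z₀, hz₀D, hz₀⟩ := IsClosed.exists_infDist_eq_dist hDclosed hDne 0
  have hz₀min : ∀ z ∈ D, ‖z₀‖ ≤ ‖z‖ := by
    intro z hz
    have h1 := Metric.infDist_le_dist_of_mem (x := 0) hz
    rw [hz₀] at h1
    simpa [dist_zero_left] using h1
  obtain ⟨w₀, hw₀V, hy₀⟩ := id hz₀D
  obtain ⟨x₀, hx₀⟩ := hw₀V
  -- membership criterion for `Q`
  have hmemQ : ∀ (x : Fin t → ℝ) (y : EuclideanSpace ℝ (Fin m)),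
      y ∈ Rg → y - toE (Φ.mulVec x) = z₀ → (x, y) ∈ Q := by
    intro x y hy hxy
    rw [hQ]
    refine ⟨hy, ?_⟩
    intro x' y' hy'
    show ‖y - toE (Φ.mulVec x)‖ ≤ _
    rw [hxy]
    exact hz₀min _ (hDmem x' y' hy')
  have hp₀Q : (-x₀, z₀ - w₀) ∈ Q := by
    apply hmemQ _ _ hy₀
    rw [hLf, map_neg, hx₀]; abel
  -- every element of `Q` realizes the value `z₀`
  have hval : ∀ p ∈ Q, p.2 - toE (Φ.mulVec p.1) = z₀ := by
    intro p hp
    rw [hQ] at hp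
    obtain ⟨hp2, hpmin⟩ := hp
    have hmem : p.2 - toE (Φ.mulVec p.1) ∈ D := hDmem _ _ hp2
    have h1 : ‖p.2 - toE (Φ.mulVec p.1)‖ ≤ ‖z₀‖ := by
      have h := hpmin (-x₀) (z₀ - w₀) hy₀
      have h2 : (z₀ - w₀) - toE (Φ.mulVec (-x₀)) = z₀ := by
        rw [hLf, map_neg, hx₀]; abel
      rwa [h2] at h
    refine nearest_unique (u := 0) hDconvex hmem hz₀D ?_ ?_
    · intro w hw
      rw [zero_sub, zero_sub, norm_neg, norm_neg]
      exact le_trans h1 (hz₀min w hw)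
    · intro w hw
      rw [zero_sub, zero_sub, norm_neg, norm_neg]
      exact hz₀min w hw
  -- the projection of `Q` onto the second coordinate
  set Q₂ : Set (EuclideanSpace ℝ (Fin m)) := Rg ∩ {y | y - z₀ ∈ V} with hQ₂def
  have hQ₂iff : ∀ y, y ∈ Q₂ ↔ ∃ x, (x, y) ∈ Q := by
    intro y
    constructor
    · rintro ⟨hy, x, hx⟩
      refine ⟨x, hmemQ x y hy ?_⟩
      rw [hLf, hx]; abel
    · rintro ⟨x, hx⟩
      have h2 : y ∈ Rg := by rw [hQ] at hx; exact hx.1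
      have h3 := hval (x, y) hx
      refine ⟨h2, x, ?_⟩
      show L x = y - z₀
      rw [← h3, hLf]; abel
  have hQ₂closed : IsClosed Q₂ := by
    apply hRclosed.inter
    have : {y : EuclideanSpace ℝ (Fin m) | y - z₀ ∈ V} = (fun y => y - z₀) ⁻¹' (V : Set _) := rfl
    rw [this]
    exact (V.closed_of_finiteDimensional).preimage (continuous_id.sub continuous_const)
  have hQ₂convex : Convex ℝ Q₂ := by
    apply hRconvex.inter
    intro y hy y' hy' α β hα hβ hαβ
    show (α • y + β • y') - z₀ ∈ V
    have hrw : (α • y + β • y') - z₀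
        = α • (y - z₀) + β • (y' - z₀) + ((α + β) - 1) • z₀ := by module
    rw [hrw, hαβ]
    have hz : ((1:ℝ) - 1) • z₀ = 0 := by norm_num
    rw [hz, add_zero]
    exact V.add_mem (V.smul_mem α hy) (V.smul_mem β hy')
  have hQ₂ne : Q₂.Nonempty := ⟨z₀ - w₀, (hQ₂iff _).mpr ⟨-x₀, hp₀Q⟩⟩
  -- the nearest point of `Q₂` to `Yhat`
  obtain ⟨yt, hytQ₂, hyt⟩ := IsClosed.exists_infDist_eq_dist hQ₂closed hQ₂ne Yhat
  have hytmin : ∀ y ∈ Q₂, ‖yt - Yhat‖ ≤ ‖y - Yhat‖ := by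
    intro y hy
    have h1 := Metric.infDist_le_dist_of_mem (x := Yhat) hy
    rw [hyt, dist_eq_norm, dist_eq_norm, norm_sub_rev Yhat yt, norm_sub_rev Yhat y] at h1
    exact h1
  obtain ⟨xt, hxtQ⟩ := (hQ₂iff yt).mp hytQ₂
  -- assemble everything
  refine ⟨⟨_, hp₀Q⟩, ?_, ?_, ?_⟩
  · -- closedness of Q
    have hQrep : Q = (Prod.snd ⁻¹' Rg) ∩
        ⋂ (x' : Fin t → ℝ), ⋂ (y' : EuclideanSpace ℝ (Fin m)), ⋂ (_ : y' ∈ Rg),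
          {p : (Fin t → ℝ) × EuclideanSpace ℝ (Fin m) |
            ‖p.2 - toE (Φ.mulVec p.1)‖ ≤ ‖y' - toE (Φ.mulVec x')‖} := by
      rw [hQ]; ext p
      simp only [Set.mem_inter_iff, Set.mem_preimage, Set.mem_iInter, Set.mem_setOf_eq]
    rw [hQrep]
    have hg : Continuous fun p : (Fin t → ℝ) × EuclideanSpace ℝ (Fin m) =>
        ‖p.2 - toE (Φ.mulVec p.1)‖ := by
      have : (fun p : (Fin t → ℝ) × EuclideanSpace ℝ (Fin m) => ‖p.2 - toE (Φ.mulVec p.1)‖)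
          = fun p => ‖p.2 - L p.1‖ := rfl
      rw [this]
      exact (continuous_snd.sub (hLcont.comp continuous_fst)).norm
    exact (hRclosed.preimage continuous_snd).inter
      (isClosed_iInter fun x' => isClosed_iInter fun y' => isClosed_iInter fun _ =>
        isClosed_le hg continuous_const)
  · -- convexity of Q
    have hsub : ∀ (cst : ℝ), Convex ℝ {p : (Fin t → ℝ) × EuclideanSpace ℝ (Fin m) |
        ‖p.2 - toE (Φ.mulVec p.1)‖ ≤ cst} := by
      intro cst p hp q hq α β hα hβ hαβ
      simp only [Set.mem_setOf_eq] at hp hq ⊢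
      have hrw : (α • p + β • q).2 - toE (Φ.mulVec (α • p + β • q).1)
          = α • (p.2 - toE (Φ.mulVec p.1)) + β • (q.2 - toE (Φ.mulVec q.1)) := by
        show (α • p + β • q).2 - L (α • p + β • q).1
          = α • (p.2 - L p.1) + β • (q.2 - L q.1)
        simp only [Prod.fst_add, Prod.snd_add, Prod.smul_fst, Prod.smul_snd, map_add, _root_.map_smul]
        module
      rw [hrw]
      calc ‖α • (p.2 - toE (Φ.mulVec p.1)) + β • (q.2 - toE (Φ.mulVec q.1))‖
          ≤ ‖α • (p.2 - toE (Φ.mulVec p.1))‖ + ‖β • (q.2 - toE (Φ.mulVec q.1))‖ :=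
            norm_add_le _ _
        _ = α * ‖p.2 - toE (Φ.mulVec p.1)‖ + β * ‖q.2 - toE (Φ.mulVec q.1)‖ := by
            rw [norm_smul, norm_smul, Real.norm_of_nonneg hα, Real.norm_of_nonneg hβ]
        _ ≤ α * cst + β * cst := by
            gcongr
        _ = cst := by rw [← add_mul, hαβ, one_mul]
    rw [hQ]
    have hQrep2 : {p : (Fin t → ℝ) × EuclideanSpace ℝ (Fin m) | p.2 ∈ Rg ∧
        ∀ x' : Fin t → ℝ, ∀ y' ∈ Rg,
          ‖p.2 - toE (Φ.mulVec p.1)‖ ≤ ‖y' - toE (Φ.mulVec x')‖}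
        = (Prod.snd ⁻¹' Rg) ∩
        ⋂ (x' : Fin t → ℝ), ⋂ (y' : EuclideanSpace ℝ (Fin m)), ⋂ (_ : y' ∈ Rg),
          {p : (Fin t → ℝ) × EuclideanSpace ℝ (Fin m) |
            ‖p.2 - toE (Φ.mulVec p.1)‖ ≤ ‖y' - toE (Φ.mulVec x')‖} := by
      ext p
      simp only [Set.mem_inter_iff, Set.mem_preimage, Set.mem_iInter, Set.mem_setOf_eq]
    rw [hQrep2]
    exact (hRconvex.linear_preimage (LinearMap.snd ℝ _ _)).inter
      (convex_iInter fun x' => convex_iInter fun y' => convex_iInter fun _ => hsub _)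
  · -- unique minimizer of the distance to Yhat
    refine ⟨(xt, yt), ⟨hxtQ, ?_⟩, ?_⟩
    · intro q hq
      have hq2 : q.2 ∈ Q₂ := (hQ₂iff q.2).mpr ⟨q.1, hq⟩
      exact hytmin q.2 hq2
    · rintro p ⟨hpQ, hpmin⟩
      have hp2Q₂ : p.2 ∈ Q₂ := (hQ₂iff p.2).mpr ⟨p.1, hpQ⟩
      have hp2min : ∀ y ∈ Q₂, ‖p.2 - Yhat‖ ≤ ‖y - Yhat‖ := by
        intro y hy
        obtain ⟨x, hx⟩ := (hQ₂iff y).mp hy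
        exact hpmin (x, y) hx
      have h2 : p.2 = yt := by
        refine nearest_unique (u := Yhat) hQ₂convex hp2Q₂ hytQ₂ ?_ ?_
        · intro w hw
          rw [norm_sub_rev Yhat p.2, norm_sub_rev Yhat w]
          exact hp2min w hw
        · intro w hw
          rw [norm_sub_rev Yhat yt, norm_sub_rev Yhat w]
          exact hytmin w hw
      have h1 : p.1 = xt := by
        have e1 := hval p hpQ
        have e2 := hval (xt, yt) hxtQ
        have e3 : toE (Φ.mulVec p.1) = toE (Φ.mulVec xt) := by
          have : p.2 - z₀ = toE (Φ.mulVec p.1) := by rw [← e1]; abel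
          have h4 : yt - z₀ = toE (Φ.mulVec xt) := by
            have := e2
            simp only at this
            rw [← this]; abel
          rw [← this, h2, h4]
        have := (WithLp.equiv 2 (Fin m → ℝ)).symm.injective e3
        exact hrank this
      exact Prod.ext h1 h2
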